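/- arXiv:2605.25885 — 3 statements merged into one kernel-verified Lean document; each statement's English description precedes it below -/
import Mathlib

section
/- Let a > 0, let j be a nonzero integer, set b = 1/(2a|j|(√(a²j²+1) + a|j| + 1/(2a|j|))), Q = (1-b²)^{-1/2}·[[1,b],[b,1]], and let A be the 2×2 matrix with entries A₁₁ = -a|j| - 1/(2a|j|), A₁₂ = 1/(2a|j|), A₂₁ = -1/(2a|j|), A₂₂ = a|j| + 1/(2a|j|). Then Q⁻¹ A Q = diag(-√(a²j²+1), √(a²j²+1)). -/
private theorem Q_diag_helper (m s b : ℝ) (hm : 0 < m)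
    (hs2 : s ^ 2 = m ^ 2 + 1) (hs : 0 < s)
    (hb : b = 1 / (2 * m * (s + m + 1 / (2 * m))))
    (Q A : Matrix (Fin 2) (Fin 2) ℝ)
    (hQ : Q = (Real.sqrt (1 - b ^ 2))⁻¹ • !![1, b; b, 1])
    (hA : A = !![-m - 1 / (2 * m), 1 / (2 * m); -(1 / (2 * m)), m + 1 / (2 * m)]) :
    Q⁻¹ * A * Q = !![-s, 0; 0, s] := by
  set c : ℝ := 1 / (2 * m) with hc_def
  have hc : 2 * m * c = 1 := by rw [hc_def]; exact mul_one_div_cancel (by positivity)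
  have hcpos : 0 < c := by positivity
  have hsum : 0 < s + m + c := by positivity
  have hb' : b * (s + m + c) = c := by
    rw [hb, div_mul_eq_mul_div, one_mul, div_eq_iff (mul_pos (by positivity) hsum).ne']
    linear_combination -(s + m + c) * hc
  have hbpos : 0 < b := by rw [hb]; positivity
  have h1b : 0 < 1 - b := by nlinarith [hb', hsum]
  have h1b2 : 0 < 1 - b ^ 2 := by nlinarith
  have key1 : c * b = m + c - s := by
    have hmul : (c * b) * (s + m + c) = (m + c - s) * (s + m + c) := by
      linear_combination c * hb' + hs2 - hc
    exact mul_right_cancel₀ hsum.ne' hmul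
  have hAQ : A * Q = Q * !![-s, 0; 0, s] := by
    rw [hA, hQ, Matrix.mul_smul, Matrix.smul_mul]
    congr 1
    ext i jj
    fin_cases i <;> fin_cases jj <;>
      simp [Matrix.mul_apply, Fin.sum_univ_two]
    · linear_combination key1
    · linear_combination -hb'
    · linear_combination hb'
    · linear_combination -key1
  have hdet : Q.det = 1 := by
    rw [hQ, Matrix.det_smul, Matrix.det_fin_two_of]
    simp only [Fintype.card_fin, inv_pow, Real.sq_sqrt h1b2.le]
    field_simp
  have hIsUnit : IsUnit Q.det := by rw [hdet]; exact isUnit_one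
  calc Q⁻¹ * A * Q = Q⁻¹ * (A * Q) := by rw [mul_assoc]
    _ = Q⁻¹ * (Q * !![-s, 0; 0, s]) := by rw [hAQ]
    _ = (Q⁻¹ * Q) * !![-s, 0; 0, s] := by rw [mul_assoc]
    _ = !![-s, 0; 0, s] := by rw [Matrix.nonsing_inv_mul Q hIsUnit, one_mul]

/-- Explicit diagonalization of the Fourier block `A_j(a)` of the linearized
Vlasov–Poisson electron-layer equations by the symplectic matrix `Q_j(a)`:
`Q⁻¹ A Q = diag(-√(a²j²+1), √(a²j²+1))`. -/
theorem Q_diagonalizes_Aj (a : ℝ) (ha : 0 < a) (j : ℤ) (hj : j ≠ 0) (b : ℝ)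
    (hb : b = 1 / (2 * a * |(j : ℝ)| *
      (Real.sqrt (a ^ 2 * (j : ℝ) ^ 2 + 1) + a * |(j : ℝ)| + 1 / (2 * a * |(j : ℝ)|))))
    (Q A : Matrix (Fin 2) (Fin 2) ℝ)
    (hQ : Q = (Real.sqrt (1 - b ^ 2))⁻¹ • !![1, b; b, 1])
    (hA : A = !![-(a * |(j : ℝ)|) - 1 / (2 * a * |(j : ℝ)|), 1 / (2 * a * |(j : ℝ)|);
                 -(1 / (2 * a * |(j : ℝ)|)), a * |(j : ℝ)| + 1 / (2 * a * |(j : ℝ)|)]) :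
    Q⁻¹ * A * Q = !![-Real.sqrt (a ^ 2 * (j : ℝ) ^ 2 + 1), 0;
                     0, Real.sqrt (a ^ 2 * (j : ℝ) ^ 2 + 1)] := by
  have hj' : (j : ℝ) ≠ 0 := Int.cast_ne_zero.mpr hj
  have hm : 0 < a * |(j : ℝ)| := by positivity
  have harg : (0:ℝ) ≤ a ^ 2 * (j : ℝ) ^ 2 + 1 := by positivity
  have hs2 : Real.sqrt (a ^ 2 * (j : ℝ) ^ 2 + 1) ^ 2 = (a * |(j : ℝ)|) ^ 2 + 1 := by
    rw [Real.sq_sqrt harg, mul_pow, sq_abs]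
  have hs : 0 < Real.sqrt (a ^ 2 * (j : ℝ) ^ 2 + 1) := Real.sqrt_pos.mpr (by positivity)
  refine Q_diag_helper (a * |(j : ℝ)|) _ b hm hs2 hs ?_ Q A hQ ?_
  · rw [hb]; ring_nf
  · rw [hA]
    have h2 : 2 * a * |(j : ℝ)| = 2 * (a * |(j : ℝ)|) := by ring
    rw [h2]
end

section
/- Let 0 < a₀ < a₁, let d ≥ 1, and let j₁, …, j_d be pairwise distinct positive integers. If c₁, …, c_d are real numbers such that ∑_{k=1}^{d} c_k · √(a²j_k² + 1) = 0 for every a ∈ [a₀, a₁], then c₁ = ⋯ = c_d = 0. -/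
open Real Finset

lemma iteratedDeriv_zero_fun (n : ℕ) (x : ℝ) :
    iteratedDeriv n (fun _ : ℝ => (0:ℝ)) x = 0 := by
  induction n generalizing x with
  | zero => simp [iteratedDeriv_zero]
  | succ n ih =>
      rw [iteratedDeriv_succ]
      have : iteratedDeriv n (fun _ : ℝ => (0:ℝ)) = fun _ => (0:ℝ) := funext fun y => ih y
      rw [this, deriv_const']

/-- Iterated derivatives of `x ↦ ∑ c k * √(x * b k + 1)` on `(0,∞)`. -/
lemma iteratedDeriv_sum_sqrt {d : ℕ} (b : Fin d → ℝ) (hb : ∀ k, 0 < b k)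
    (c : Fin d → ℝ) (n : ℕ) :
    ∀ x ∈ Set.Ioi (0:ℝ),
      iteratedDeriv n (fun x => ∑ k, c k * Real.sqrt (x * b k + 1)) x
        = (∏ i ∈ Finset.range n, ((1:ℝ)/2 - i)) *
          ∑ k, c k * b k ^ n * (x * b k + 1) ^ ((1:ℝ)/2 - n) := by
  induction n with
  | zero =>
      intro x hx
      simp only [iteratedDeriv_zero, Finset.range_zero, Finset.prod_empty, one_mul,
        Nat.cast_zero, sub_zero, pow_zero, mul_one]
      refine Finset.sum_congr rfl fun k _ => ?_
      rw [Real.sqrt_eq_rpow]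
  | succ n ih =>
      intro x hx
      have hx0 : (0:ℝ) < x := hx
      rw [iteratedDeriv_succ]
      have hmem : Set.Ioi (0:ℝ) ∈ nhds x := (isOpen_Ioi).mem_nhds hx
      have hev : iteratedDeriv n (fun x => ∑ k, c k * Real.sqrt (x * b k + 1))
          =ᶠ[nhds x] (fun y => (∏ i ∈ Finset.range n, ((1:ℝ)/2 - i)) *
            ∑ k, c k * b k ^ n * (y * b k + 1) ^ ((1:ℝ)/2 - n)) := by
        filter_upwards [hmem] with y hy
        exact ih y hy
      rw [hev.deriv_eq]
      have ht : ∀ k, (0:ℝ) < x * b k + 1 := fun k => by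
        have := hb k; nlinarith
      have hder : HasDerivAt (fun y => (∏ i ∈ Finset.range n, ((1:ℝ)/2 - i)) *
            ∑ k, c k * b k ^ n * (y * b k + 1) ^ ((1:ℝ)/2 - n))
          ((∏ i ∈ Finset.range n, ((1:ℝ)/2 - i)) *
            ∑ k, c k * b k ^ n * (b k * ((1:ℝ)/2 - n) * (x * b k + 1) ^ ((1:ℝ)/2 - n - 1))) x := by
        refine HasDerivAt.const_mul _ ?_
        refine HasDerivAt.fun_sum fun k _ => ?_
        have h1 : HasDerivAt (fun y : ℝ => y * b k + 1) (b k) x := by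
          simpa using ((hasDerivAt_id x).mul_const (b k)).add_const 1
        exact (h1.rpow_const (Or.inl (ht k).ne')).const_mul _
      rw [hder.deriv, Finset.prod_range_succ]
      rw [Finset.mul_sum, Finset.mul_sum]
      refine Finset.sum_congr rfl fun k _ => ?_
      have : ((1:ℝ)/2 - n - 1) = (1:ℝ)/2 - (n+1 : ℕ) := by push_cast; ring
      rw [this]
      ring

/-- Non-degeneracy of the equilibrium frequency vector: the functions
`a ↦ √(a²j_k²+1)` for pairwise distinct positive integers `j_k` are linearly
independent on any interval `[a₀,a₁]` with `0 < a₀ < a₁`. -/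
theorem nondegeneracy_equilibrium_frequencies (a₀ a₁ : ℝ) (h0 : 0 < a₀) (h01 : a₀ < a₁)
    (d : ℕ) (hd : 1 ≤ d) (j : Fin d → ℕ) (hpos : ∀ k, 0 < j k)
    (hinj : Function.Injective j) (c : Fin d → ℝ)
    (h : ∀ a ∈ Set.Icc a₀ a₁, ∑ k, c k * Real.sqrt (a ^ 2 * (j k : ℝ) ^ 2 + 1) = 0) :
    ∀ k, c k = 0 := by
  set b : Fin d → ℝ := fun k => ((j k : ℝ)) ^ 2 with hbdef
  have hb : ∀ k, 0 < b k := fun k => by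
    have := hpos k
    positivity
  have binj : Function.Injective b := by
    intro k l hkl
    have hkl' : ((j k : ℝ)) ^ 2 = ((j l : ℝ)) ^ 2 := hkl
    have : (j k : ℝ) = (j l : ℝ) := by
      have hk : (0:ℝ) ≤ (j k : ℝ) := Nat.cast_nonneg _
      have hl : (0:ℝ) ≤ (j l : ℝ) := Nat.cast_nonneg _
      nlinarith [hkl', hk, hl]
    exact hinj (by exact_mod_cast this)
  set H : ℝ → ℝ := fun x => ∑ k, c k * Real.sqrt (x * b k + 1) with hHdef
  -- H vanishes on the open interval (a₀², a₁²)
  have hsq : a₀ ^ 2 < a₁ ^ 2 := by nlinarith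
  have hHzero : ∀ x ∈ Set.Ioo (a₀ ^ 2) (a₁ ^ 2), H x = 0 := by
    intro x hx
    have hx0 : (0:ℝ) < x := lt_trans (by positivity) hx.1
    have ha : Real.sqrt x ∈ Set.Icc a₀ a₁ := by
      constructor
      · have := Real.sqrt_le_sqrt hx.1.le
        rwa [Real.sqrt_sq h0.le] at this
      · have := Real.sqrt_le_sqrt hx.2.le
        rwa [Real.sqrt_sq (by linarith : (0:ℝ) ≤ a₁)] at this
    have hxa : Real.sqrt x ^ 2 = x := Real.sq_sqrt hx0.le
    have := h (Real.sqrt x) ha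
    rw [hHdef]
    simp only [hbdef]
    rw [← this]
    refine Finset.sum_congr rfl fun k _ => ?_
    rw [hxa]
  -- the midpoint
  set x₀ : ℝ := (a₀ ^ 2 + a₁ ^ 2) / 2 with hx₀def
  have hx₀mem : x₀ ∈ Set.Ioo (a₀ ^ 2) (a₁ ^ 2) := by
    constructor <;> (rw [hx₀def]; linarith)
  have hx₀pos : (0:ℝ) < x₀ := lt_trans (by positivity) hx₀mem.1
  have hHev : H =ᶠ[nhds x₀] (fun _ => (0:ℝ)) := by
    filter_upwards [isOpen_Ioo.mem_nhds hx₀mem] with y hy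
    exact hHzero y hy
  have ht : ∀ k, (0:ℝ) < x₀ * b k + 1 := fun k => by
    have := hb k; nlinarith
  -- all iterated derivatives of H vanish at x₀
  have hiter : ∀ n : ℕ, (∏ i ∈ Finset.range n, ((1:ℝ)/2 - i)) *
      ∑ k, c k * b k ^ n * (x₀ * b k + 1) ^ ((1:ℝ)/2 - n) = 0 := by
    intro n
    have h1 := iteratedDeriv_sum_sqrt b hb c n x₀ hx₀pos
    rw [hHdef] at *
    rw [← h1, Filter.EventuallyEq.iteratedDeriv_eq n hHev]
    rw [iteratedDeriv_zero_fun n]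
  have hprod : ∀ n : ℕ, (∏ i ∈ Finset.range n, ((1:ℝ)/2 - i)) ≠ 0 := by
    intro n
    refine Finset.prod_ne_zero_iff.mpr fun i _ => ?_
    rcases Nat.eq_zero_or_pos i with hi | hi
    · subst hi; norm_num
    · have : (1:ℝ) ≤ i := by exact_mod_cast hi
      intro hcon
      have : (1:ℝ)/2 = i := by linarith [sub_eq_zero.mp hcon]
      linarith
  have hsum : ∀ n : ℕ, ∑ k, c k * b k ^ n * (x₀ * b k + 1) ^ ((1:ℝ)/2 - n) = 0 := fun n =>
    (mul_eq_zero.mp (hiter n)).resolve_left (hprod n)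
  -- rewrite as a Vandermonde system
  set v : Fin d → ℝ := fun k => c k * (x₀ * b k + 1) ^ ((1:ℝ)/2) with hvdef
  set f : Fin d → ℝ := fun k => b k / (x₀ * b k + 1) with hfdef
  have key : ∀ n : ℕ, ∑ k, f k ^ n * v k = 0 := by
    intro n
    rw [← hsum n]
    refine Finset.sum_congr rfl fun k _ => ?_
    rw [hvdef, hfdef]
    have h2 : (x₀ * b k + 1) ^ ((1:ℝ)/2 - n)
        = (x₀ * b k + 1) ^ ((1:ℝ)/2) / (x₀ * b k + 1) ^ n := by
      rw [Real.rpow_sub (ht k), Real.rpow_natCast]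
    rw [h2, div_pow]
    have hne : ((x₀ * b k + 1) ^ n) ≠ 0 := pow_ne_zero _ (ht k).ne'
    field_simp
  have finj : Function.Injective f := by
    intro k l hkl
    rw [hfdef] at hkl
    simp only at hkl
    have hk := ht k
    have hl := ht l
    have : b k * (x₀ * b l + 1) = b l * (x₀ * b k + 1) := by
      rw [div_eq_div_iff hk.ne' hl.ne'] at hkl
      linarith [hkl]
    have : b k = b l := by nlinarith
    exact binj this
  have hv : v = 0 := by
    have hdet : ((Matrix.vandermonde f).transpose).det ≠ 0 := by
      rw [Matrix.det_transpose]
      exact Matrix.det_vandermonde_ne_zero_iff.mpr finj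
    refine Matrix.eq_zero_of_mulVec_eq_zero hdet ?_
    funext n
    simpa [Matrix.mulVec, Matrix.vandermonde, dotProduct] using key (n : ℕ)
  intro k
  have hk := congrFun hv k
  rw [hvdef] at hk
  simp only [Pi.zero_apply] at hk
  have hpow : (0:ℝ) < (x₀ * b k + 1) ^ ((1:ℝ)/2) := Real.rpow_pos_of_pos (ht k) _
  rcases mul_eq_zero.mp hk with h' | h'
  · exact h'
  · exact absurd h' hpow.ne'
end

section
/- Let 0 < a₀ < a₁, let d ≥ 1, and let j₁, …, j_d be pairwise distinct positive integers. If c₁, …, c_d, α, β are real numbers such that ∑_{k=1}^{d} c_k · √(a²j_k² + 1) + α·a + β = 0 for every a ∈ [a₀, a₁], then c₁ = ⋯ = c_d = 0, α = 0 and β = 0. -/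
/-- Extended non-degeneracy: the family `{1, a, √(a²j₁²+1), …, √(a²j_d²+1)}`, with
pairwise distinct positive integers `j_k`, is linearly independent on `[a₀,a₁]`. -/
theorem nondegeneracy_extended (a₀ a₁ : ℝ) (h0 : 0 < a₀) (h01 : a₀ < a₁)
    (d : ℕ) (hd : 1 ≤ d) (j : Fin d → ℕ) (hpos : ∀ k, 0 < j k)
    (hinj : Function.Injective j) (c : Fin d → ℝ) (α β : ℝ)
    (h : ∀ a ∈ Set.Icc a₀ a₁,
      (∑ k, c k * Real.sqrt (a ^ 2 * (j k : ℝ) ^ 2 + 1)) + α * a + β = 0) :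
    (∀ k, c k = 0) ∧ α = 0 ∧ β = 0 := by
  have hjpos : ∀ k, (0:ℝ) < (j k : ℝ) := fun k => by exact_mod_cast hpos k
  have ha0 : (0:ℝ) < a₀ ^ 2 := by positivity
  have hlt : a₀ ^ 2 < a₁ ^ 2 := by nlinarith
  set I : Set ℝ := Set.Ioo (a₀ ^ 2) (a₁ ^ 2) with hI
  set L : ℕ → ℝ → ℝ := fun n t =>
    (∑ k, c k * ((j k : ℝ) ^ 2) ^ n * ((j k : ℝ) ^ 2 * t + 1) ^ ((1:ℝ)/2 - n))
      + α * t ^ ((1:ℝ)/2 - n) with hL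
  -- the key induction: all "derivative identities" hold on I
  have key : ∀ n : ℕ, ∀ t ∈ I, L n t = if n = 0 then -β else 0 := by
    intro n
    induction n with
    | zero =>
      intro t ht
      have ht0 : (0:ℝ) < t := lt_trans ha0 ht.1
      have hs : Real.sqrt t ∈ Set.Icc a₀ a₁ := by
        constructor
        · have := Real.sqrt_le_sqrt ht.1.le
          rwa [Real.sqrt_sq h0.le] at this
        · have := Real.sqrt_le_sqrt ht.2.le
          rwa [Real.sqrt_sq (by linarith : (0:ℝ) ≤ a₁)] at this
      have h2 := h (Real.sqrt t) hs
      rw [Real.sq_sqrt ht0.le] at h2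
      simp only [hL, pow_zero, mul_one, Nat.cast_zero, sub_zero, ← Real.sqrt_eq_rpow,
        reduceIte]
      have hsum : (∑ k, c k * Real.sqrt ((j k : ℝ) ^ 2 * t + 1))
          = ∑ k, c k * Real.sqrt (t * (j k : ℝ) ^ 2 + 1) := by
        apply Finset.sum_congr rfl
        intro k _
        rw [mul_comm ((j k : ℝ)^2) t]
      rw [hsum]
      linarith
    | succ n ih =>
      intro t ht
      have ht0 : (0:ℝ) < t := lt_trans ha0 ht.1
      set e : ℝ := (1:ℝ)/2 - n with he
      have hev : L n =ᶠ[nhds t] fun _ => (if n = 0 then -β else 0) :=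
        Filter.eventually_of_mem (isOpen_Ioo.mem_nhds ht) ih
      have hconst : HasDerivAt (L n) 0 t :=
        (hasDerivAt_const t _).congr_of_eventuallyEq hev
      have hderiv : HasDerivAt (L n)
          ((∑ k, c k * ((j k : ℝ) ^ 2) ^ n *
              ((j k : ℝ) ^ 2 * e * ((j k : ℝ) ^ 2 * t + 1) ^ (e - 1)))
            + α * (e * t ^ (e - 1))) t := by
        apply HasDerivAt.add
        · apply HasDerivAt.fun_sum
          intro k _
          have h1 : HasDerivAt (fun t : ℝ => (j k : ℝ) ^ 2 * t + 1) ((j k : ℝ) ^ 2) t := by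
            simpa using ((hasDerivAt_id t).const_mul ((j k : ℝ) ^ 2)).add_const 1
          have hx : (j k : ℝ) ^ 2 * t + 1 ≠ 0 := by positivity
          exact (h1.rpow_const (Or.inl hx)).const_mul (c k * ((j k : ℝ) ^ 2) ^ n)
        · exact (Real.hasDerivAt_rpow_const (p := e) (Or.inl ht0.ne')).const_mul α
      have heq := hconst.unique hderiv
      have hcast : e - 1 = (1:ℝ)/2 - ((n + 1 : ℕ) : ℝ) := by push_cast [he]; ring
      have hexp : e * L (n+1) t = 0 := by
        rw [hL]
        simp only [← hcast]
        rw [heq, mul_add, Finset.mul_sum]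
        congr 1
        · exact Finset.sum_congr rfl fun k _ => by rw [pow_succ]; ring
        · ring
      have hene : e ≠ 0 := by
        rw [he]
        intro hn
        have h2n : (2 * n : ℝ) = 1 := by linarith
        have : (2 * n : ℕ) = 1 := by exact_mod_cast h2n
        omega
      have : L (n+1) t = 0 := by
        rcases mul_eq_zero.mp hexp with h' | h'
        · exact absurd h' hene
        · exact h'
      simpa using this
  -- evaluate at the midpoint t₀
  set t₀ : ℝ := (a₀ ^ 2 + a₁ ^ 2) / 2 with ht₀def
  have ht₀I : t₀ ∈ I := ⟨by simp only [ht₀def]; linarith, by simp only [ht₀def]; linarith⟩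
  have ht₀pos : (0:ℝ) < t₀ := lt_trans ha0 ht₀I.1
  have hPpos : ∀ k, (0:ℝ) < (j k : ℝ) ^ 2 * t₀ + 1 := fun k => by positivity
  set V : Fin (d+1) → ℝ :=
    Fin.cons (1 / t₀) (fun k => (j k : ℝ) ^ 2 / ((j k : ℝ) ^ 2 * t₀ + 1)) with hV
  set W : Fin (d+1) → ℝ :=
    Fin.cons (α * Real.sqrt t₀) (fun k => c k * Real.sqrt ((j k : ℝ) ^ 2 * t₀ + 1)) with hW
  set u : Fin (d+1) → ℝ := fun i => W i * V i with hu
  -- helper identity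
  have hterm : ∀ P M : ℝ, 0 < P → ∀ n : ℕ,
      M ^ n * P ^ ((1:ℝ)/2 - n) = Real.sqrt P * (M / P) ^ n := by
    intro P M hP n
    rw [Real.rpow_sub hP, Real.rpow_natCast, Real.sqrt_eq_rpow, div_pow]
    field_simp
  -- L in Vandermonde form at t₀
  have hLform : ∀ n : ℕ, L n t₀ = ∑ i, W i * V i ^ n := by
    intro n
    rw [hL, Fin.sum_univ_succ]
    simp only [hW, hV, Fin.cons_zero, Fin.cons_succ]
    rw [add_comm]
    congr 1
    · have := hterm t₀ 1 ht₀pos n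
      rw [one_pow, one_mul] at this
      rw [this]
      ring
    · apply Finset.sum_congr rfl
      intro k _
      rw [mul_assoc, hterm _ _ (hPpos k) n]
      ring
  -- the Vandermonde system
  have hsys : ∀ m : Fin (d+1), (∑ i, u i * V i ^ (m : ℕ)) = 0 := by
    intro m
    have hk := key ((m : ℕ) + 1) t₀ ht₀I
    rw [if_neg (Nat.succ_ne_zero _), hLform] at hk
    rw [← hk]
    apply Finset.sum_congr rfl
    intro i _
    simp only [hu]
    rw [pow_succ]
    ring
  -- V is injective
  have hVinj : Function.Injective V := by
    intro i i' hii'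
    induction i using Fin.cases with
    | zero =>
      induction i' using Fin.cases with
      | zero => rfl
      | succ l =>
        exfalso
        simp only [hV, Fin.cons_zero, Fin.cons_succ] at hii'
        rw [div_eq_div_iff ht₀pos.ne' (hPpos l).ne'] at hii'
        nlinarith [hjpos l]
    | succ k =>
      induction i' using Fin.cases with
      | zero =>
        exfalso
        simp only [hV, Fin.cons_zero, Fin.cons_succ] at hii'
        rw [div_eq_div_iff (hPpos k).ne' ht₀pos.ne'] at hii'
        nlinarith [hjpos k]
      | succ l =>
        simp only [hV, Fin.cons_succ] at hii'
        rw [div_eq_div_iff (hPpos k).ne' (hPpos l).ne'] at hii'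
        have hjj : (j k : ℝ) = (j l : ℝ) := by
          have h2 : (j k : ℝ) ^ 2 = (j l : ℝ) ^ 2 := by nlinarith
          nlinarith [hjpos k, hjpos l]
        have : j k = j l := by exact_mod_cast hjj
        rw [hinj this]
  have hu0 : u = 0 := Matrix.eq_zero_of_forall_pow_sum_mul_pow_eq_zero hVinj hsys
  have hVpos : ∀ i, (0:ℝ) < V i := by
    intro i
    induction i using Fin.cases with
    | zero => simp only [hV, Fin.cons_zero]; positivity
    | succ k =>
      simp only [hV, Fin.cons_succ]
      have := hjpos k
      positivity
  have hW0 : ∀ i, W i = 0 := by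
    intro i
    have := congrFun hu0 i
    simp only [hu, Pi.zero_apply] at this
    rcases mul_eq_zero.mp this with h' | h'
    · exact h'
    · exact absurd h' (hVpos i).ne'
  have hc : ∀ k, c k = 0 := by
    intro k
    have := hW0 (Fin.succ k)
    simp only [hW, Fin.cons_succ] at this
    rcases mul_eq_zero.mp this with h' | h'
    · exact h'
    · exact absurd h' (Real.sqrt_pos.mpr (hPpos k)).ne'
  have hα : α = 0 := by
    have := hW0 0
    simp only [hW, Fin.cons_zero] at this
    rcases mul_eq_zero.mp this with h' | h'
    · exact h'
    · exact absurd h' (Real.sqrt_pos.mpr ht₀pos).ne'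
  have hβ : β = 0 := by
    have := h a₀ ⟨le_refl _, h01.le⟩
    simp only [hc, hα, zero_mul, Finset.sum_const_zero, zero_add] at this
    linarith
  exact ⟨hc, hα, hβ⟩
end
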